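/- arXiv:2501.11255 — 5 statements merged into one kernel-verified Lean document; each statement's English description precedes it below -/
import Mathlib

section
/- Let f : ℝ → ℝ, let Ω ⊂ ℝ, let V : Ω → ℝ be continuously differentiable, let μ > 0, and let p, q be natural numbers with q ≥ 1. Suppose V′(x)·f(sign(x)·|x|^q) ≤ −μ·|x|^p for all x ∈ Ω. Define Ω̃ := {z ∈ ℝ : sign(z)·|z|^{1/q} ∈ Ω} and Ṽ(z) := V(sign(z)·|z|^{1/q}). Then for all z ∈ Ω̃ \ {0}, the function Ṽ is differentiable at z and Ṽ′(z)·f(z) ≤ −(μ/q)·|z|^{(1+p−q)/q}. -/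
/-- scalar derivative computation along the change of variables.
If `V'(x)·f(sign(x)·|x|^q) ≤ -μ·|x|^p` on `Ω`, then `Ṽ(z) = V(sign(z)·|z|^{1/q})` is
differentiable at every nonzero `z ∈ Ω̃` and `Ṽ'(z)·f(z) ≤ -(μ/q)·|z|^{(1+p-q)/q}`. -/
theorem stmt_1
    (f V : ℝ → ℝ) (Ω : Set ℝ)
    (hV : ContDiffOn ℝ 1 V Ω)
    (μ : ℝ) (hμ : 0 < μ) (p q : ℕ) (hq : 1 ≤ q)
    (hlyap : ∀ x ∈ Ω,
      deriv V x * f (Real.sign x * |x| ^ (q : ℝ)) ≤ -μ * |x| ^ (p : ℝ)) :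
    let Ωt : Set ℝ := {z : ℝ | Real.sign z * |z| ^ (1 / (q : ℝ)) ∈ Ω}
    let Vt : ℝ → ℝ := fun z => V (Real.sign z * |z| ^ (1 / (q : ℝ)))
    ∀ z ∈ Ωt, z ≠ 0 →
      DifferentiableAt ℝ Vt z ∧
      deriv Vt z * f z ≤ -(μ / (q : ℝ)) * |z| ^ ((1 + (p : ℝ) - (q : ℝ)) / (q : ℝ)) := by
  intro Ωt Vt z hz hz0
  have hqpos : (0:ℝ) < (q:ℝ) := by exact_mod_cast Nat.lt_of_lt_of_le Nat.zero_lt_one hq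
  have hq0 : (q:ℝ) ≠ 0 := ne_of_gt hqpos
  set c : ℝ := 1 / (q : ℝ) with hc
  have habs : 0 < |z| := abs_pos.mpr hz0
  set x : ℝ := Real.sign z * |z| ^ c with hxdef
  -- derivative of the inner map g
  have hg : HasDerivAt (fun w => Real.sign w * |w| ^ c) (c * |z| ^ (c - 1)) z := by
    rcases hz0.lt_or_gt with h | h
    · -- z < 0
      have h1 : HasDerivAt (fun w : ℝ => (-w) ^ c) (c * (-z) ^ (c - 1) * (-1)) z := by
        have h2 := Real.hasDerivAt_rpow_const (x := -z) (p := c)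
          (Or.inl (neg_ne_zero.mpr (ne_of_lt h)))
        have h3 : HasDerivAt (fun w : ℝ => -w) (-1) z := (hasDerivAt_id z).neg
        exact h2.comp z h3
      have h4 : HasDerivAt (fun w : ℝ => -((-w) ^ c)) (c * (-z) ^ (c - 1)) z := by
        simpa [Pi.neg_def] using h1.neg
      have heq : (fun w => Real.sign w * |w| ^ c) =ᶠ[nhds z] (fun w : ℝ => -((-w) ^ c)) := by
        filter_upwards [Iio_mem_nhds h] with w hw
        simp only [Set.mem_Iio] at hw
        rw [Real.sign_of_neg hw, abs_of_neg hw]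
        ring
      have h5 : HasDerivAt (fun w => Real.sign w * |w| ^ c) (c * (-z) ^ (c - 1)) z :=
        h4.congr_of_eventuallyEq heq
      rw [abs_of_neg h]
      exact h5
    · -- z > 0
      have h1 : HasDerivAt (fun w : ℝ => w ^ c) (c * z ^ (c - 1)) z :=
        Real.hasDerivAt_rpow_const (Or.inl (ne_of_gt h))
      have heq : (fun w => Real.sign w * |w| ^ c) =ᶠ[nhds z] (fun w : ℝ => w ^ c) := by
        filter_upwards [Ioi_mem_nhds h] with w hw
        simp only [Set.mem_Ioi] at hw
        rw [Real.sign_of_pos hw, abs_of_pos hw, one_mul]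
      have h5 : HasDerivAt (fun w => Real.sign w * |w| ^ c) (c * z ^ (c - 1)) z :=
        h1.congr_of_eventuallyEq heq
      rw [abs_of_pos h]
      exact h5
  have hxΩ : x ∈ Ω := hz
  have hxabs : |x| = |z| ^ c := by
    rcases hz0.lt_or_gt with h | h
    · rw [hxdef, Real.sign_of_neg h]
      rw [abs_mul, abs_neg, abs_one, one_mul, abs_of_pos (Real.rpow_pos_of_pos habs c)]
    · rw [hxdef, Real.sign_of_pos h, one_mul, abs_of_pos (Real.rpow_pos_of_pos habs c)]
  have hxpos : 0 < |x| := hxabs ▸ Real.rpow_pos_of_pos habs c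
  -- key identity : sign x * |x|^q = z
  have hkey : Real.sign x * |x| ^ (q:ℝ) = z := by
    have hcq : c * (q:ℝ) = 1 := by rw [hc]; field_simp
    have habsq : |x| ^ (q:ℝ) = |z| := by
      rw [hxabs, ← Real.rpow_mul habs.le, hcq, Real.rpow_one]
    have hsign : Real.sign x = Real.sign z := by
      rcases hz0.lt_or_gt with h | h
      · have : x < 0 := by
          rw [hxdef, Real.sign_of_neg h]
          nlinarith [Real.rpow_pos_of_pos habs c]
        rw [Real.sign_of_neg this, Real.sign_of_neg h]
      · have : 0 < x := by
          rw [hxdef, Real.sign_of_pos h, one_mul]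
          exact Real.rpow_pos_of_pos habs c
        rw [Real.sign_of_pos this, Real.sign_of_pos h]
    rw [hsign, habsq]
    rcases hz0.lt_or_gt with h | h
    · rw [Real.sign_of_neg h, abs_of_neg h]; ring
    · rw [Real.sign_of_pos h, abs_of_pos h, one_mul]
  have hineq : deriv V x * f z ≤ -μ * |x| ^ (p:ℝ) := by
    have := hlyap x hxΩ
    rwa [hkey] at this
  have hxppos : (0:ℝ) < |x| ^ (p:ℝ) := Real.rpow_pos_of_pos hxpos _
  have hneg : deriv V x * f z < 0 := lt_of_le_of_lt hineq (by nlinarith)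
  have hdV : DifferentiableAt ℝ V x := by
    by_contra hnd
    rw [deriv_zero_of_not_differentiableAt hnd, zero_mul] at hneg
    exact lt_irrefl _ hneg
  have hVt : HasDerivAt Vt (deriv V x * (c * |z| ^ (c - 1))) z := by
    have := (hdV.hasDerivAt).comp z hg
    simpa [Vt, hc, Function.comp_def, one_div] using this
  refine ⟨hVt.differentiableAt, ?_⟩
  rw [hVt.deriv]
  have hcpos : 0 ≤ c * |z| ^ (c - 1) := by positivity
  calc deriv V x * (c * |z| ^ (c - 1)) * f z
      = (deriv V x * f z) * (c * |z| ^ (c - 1)) := by ring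
    _ ≤ (-μ * |x| ^ (p:ℝ)) * (c * |z| ^ (c - 1)) := mul_le_mul_of_nonneg_right hineq hcpos
    _ = -(μ / (q:ℝ)) * (|z| ^ ((p:ℝ) * c) * |z| ^ (c - 1)) := by
        rw [hxabs, ← Real.rpow_mul habs.le, mul_comm c (p:ℝ)]
        rw [hc]
        ring
    _ = -(μ / (q:ℝ)) * |z| ^ ((1 + (p:ℝ) - (q:ℝ)) / (q:ℝ)) := by
        rw [← Real.rpow_add habs]
        congr 1
        rw [hc]
        field_simp [hq0]
        ring
end

section
/- Let D ⊆ ℝⁿ, let f : D → ℝⁿ be continuous, let Ω ⊆ D contain an open neighborhood of the origin, and let V : Ω → ℝ be positive definite (V(0) = 0 and V(x) > 0 for x ∈ Ω \ {0}) and continuously differentiable on Ω \ {0}. Suppose there exist μ > 0 and γ ∈ (0, 1) such that ∇V(x)ᵀ f(x) + μ·V(x)^γ ≤ 0 for all x ∈ Ω \ {0}. Then for every T > 0 and every continuously differentiable curve x : [0, T) → ℝⁿ satisfying x′(t) = f(x(t)) and x(t) ∈ Ω \ {0} for all t ∈ [0, T), it holds that T ≤ (1/(μ·(1−γ)))·V(x(0))^{1−γ}.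 -/
/-- Lyapunov characterization of finite-time stability at solution level,
Thm. 1 of the paper / Bhat–Bernstein. -/
theorem stmt_6 {n : ℕ}
    (D Ω : Set (EuclideanSpace ℝ (Fin n)))
    (f : EuclideanSpace ℝ (Fin n) → EuclideanSpace ℝ (Fin n))
    (V : EuclideanSpace ℝ (Fin n) → ℝ)
    (hΩD : Ω ⊆ D) (hf : ContinuousOn f D)
    (hΩnhds : Ω ∈ nhds (0 : EuclideanSpace ℝ (Fin n)))
    (hV : ContDiffOn ℝ 1 V (Ω \ {0}))
    (hV0 : V 0 = 0)
    (hVpos : ∀ x ∈ Ω, x ≠ 0 → 0 < V x)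
    (μ γ : ℝ) (hμ : 0 < μ) (hγ : γ ∈ Set.Ioo (0 : ℝ) 1)
    (hlyap : ∀ x ∈ Ω, x ≠ 0 → fderiv ℝ V x (f x) + μ * V x ^ γ ≤ 0) :
    ∀ (T : ℝ), 0 < T →
      ∀ x : ℝ → EuclideanSpace ℝ (Fin n),
        ContDiffOn ℝ 1 x (Set.Ico 0 T) →
        (∀ t ∈ Set.Ico (0 : ℝ) T, HasDerivWithinAt x (f (x t)) (Set.Ico 0 T) t) →
        (∀ t ∈ Set.Ico (0 : ℝ) T, x t ∈ Ω ∧ x t ≠ 0) →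
        T ≤ (1 / (μ * (1 - γ))) * V (x 0) ^ (1 - γ) := by
  intro T hT x hx hx' hxmem
  obtain ⟨hγ0, hγ1⟩ := hγ
  set c : ℝ := μ * (1 - γ) with hc_def
  have hc : 0 < c := mul_pos hμ (by linarith)
  set g : ℝ → ℝ := fun t => V (x t) with hg
  have hgpos : ∀ t ∈ Set.Ico (0:ℝ) T, 0 < g t := fun t ht =>
    hVpos _ (hxmem t ht).1 (hxmem t ht).2
  -- derivative of g along the trajectory
  have hgd : ∀ t ∈ Set.Ico (0:ℝ) T,
      HasDerivWithinAt g (fderiv ℝ V (x t) (f (x t))) (Set.Ico 0 T) t := by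
    intro t ht
    have hdiff : DifferentiableAt ℝ V (x t) := by
      by_contra h
      have h0 : fderiv ℝ V (x t) = 0 := fderiv_zero_of_not_differentiableAt h
      have hl := hlyap (x t) (hxmem t ht).1 (hxmem t ht).2
      rw [h0] at hl
      simp only [ContinuousLinearMap.zero_apply, zero_add] at hl
      nlinarith [Real.rpow_pos_of_pos (hgpos t ht) γ]
    exact hdiff.hasFDerivAt.comp_hasDerivWithinAt t (hx' t ht)
  -- the auxiliary function h t = g t ^ (1-γ) + c * t
  set h : ℝ → ℝ := fun t => g t ^ (1 - γ) + c * t with hh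
  have hhd : ∀ t ∈ Set.Ico (0:ℝ) T,
      HasDerivWithinAt h
        (fderiv ℝ V (x t) (f (x t)) * (1 - γ) * g t ^ (1 - γ - 1) + c)
        (Set.Ico 0 T) t := by
    intro t ht
    have h1 : HasDerivWithinAt (fun t => g t ^ (1 - γ))
        (fderiv ℝ V (x t) (f (x t)) * (1 - γ) * g t ^ (1 - γ - 1)) (Set.Ico 0 T) t :=
      (hgd t ht).rpow_const (Or.inl (ne_of_gt (hgpos t ht)))
    have h2 : HasDerivWithinAt (fun t : ℝ => c * t) c (Set.Ico 0 T) t := by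
      simpa using (hasDerivWithinAt_id t (Set.Ico (0:ℝ) T)).const_mul c
    exact h1.add h2
  have hderiv_nonpos : ∀ t ∈ Set.Ico (0:ℝ) T,
      fderiv ℝ V (x t) (f (x t)) * (1 - γ) * g t ^ (1 - γ - 1) + c ≤ 0 := by
    intro t ht
    have hl := hlyap (x t) (hxmem t ht).1 (hxmem t ht).2
    have hgt := hgpos t ht
    have hpow : g t ^ γ * g t ^ (-γ) = 1 := by
      rw [← Real.rpow_add hgt]; simp
    have hpos : (0:ℝ) < g t ^ (-γ) := Real.rpow_pos_of_pos hgt _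
    have h1γ : g t ^ (1 - γ - 1) = g t ^ (-γ) := by norm_num
    rw [h1γ]
    have hd : fderiv ℝ V (x t) (f (x t)) ≤ -μ * g t ^ γ := by
      have : fderiv ℝ V (x t) (f (x t)) + μ * V (x t) ^ γ ≤ 0 := hl
      simp only [hg] at *
      linarith
    nlinarith [mul_le_mul_of_nonneg_right hd
      (le_of_lt (mul_pos (by linarith : (0:ℝ) < 1 - γ) hpos))]
  -- h is antitone on Ico 0 T
  have hanti : AntitoneOn h (Set.Ico 0 T) := by
    apply antitoneOn_of_deriv_nonpos (convex_Ico 0 T)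
    · intro t ht
      exact (hhd t ht).continuousWithinAt
    · intro t ht
      rw [interior_Ico] at ht
      exact ((hhd t ⟨le_of_lt ht.1, ht.2⟩).hasDerivAt
        (Ico_mem_nhds ht.1 ht.2)).differentiableAt.differentiableWithinAt
    · intro t ht
      rw [interior_Ico] at ht
      have := ((hhd t ⟨le_of_lt ht.1, ht.2⟩).hasDerivAt
        (Ico_mem_nhds ht.1 ht.2)).deriv
      rw [this]
      exact hderiv_nonpos t ⟨le_of_lt ht.1, ht.2⟩
  have h0mem : (0:ℝ) ∈ Set.Ico (0:ℝ) T := ⟨le_refl 0, hT⟩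
  have key : ∀ t ∈ Set.Ico (0:ℝ) T, c * t ≤ g 0 ^ (1 - γ) := by
    intro t ht
    have := hanti h0mem ht ht.1
    have hWpos : (0:ℝ) < g t ^ (1 - γ) := Real.rpow_pos_of_pos (hgpos t ht) _
    simp only [hh] at this
    simp only [mul_zero, add_zero] at this
    linarith
  -- conclude
  by_contra hcon
  push_neg at hcon
  set B : ℝ := V (x 0) ^ (1 - γ) with hB
  have hBg : g 0 ^ (1 - γ) = B := rfl
  have hBpos : 0 < B := Real.rpow_pos_of_pos (hgpos 0 h0mem) _
  set t₀ : ℝ := ((1 / c) * B + T) / 2 with ht₀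
  have h1 : (1 / c) * B < t₀ := by
    simp only [ht₀]; linarith
  have h2 : t₀ < T := by simp only [ht₀]; linarith
  have h3 : 0 ≤ t₀ := le_of_lt (lt_of_le_of_lt (by positivity) h1)
  have hkey := key t₀ ⟨h3, h2⟩
  have heq : c * (1 / c * B) = B := by field_simp
  nlinarith [mul_lt_mul_of_pos_left h1 hc]
end

section
/- Let T > 0, μ > 0, and γ ∈ (0, 1). Suppose v : [0, T) → ℝ is differentiable and satisfies v(t) > 0 and v′(t) ≤ −μ·v(t)^γ for all t ∈ [0, T). Then T ≤ v(0)^{1−γ}/(μ·(1−γ)). -/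
/-- scalar comparison lemma bounding the time horizon. -/
theorem stmt_7
    (T μ γ : ℝ) (hT : 0 < T) (hμ : 0 < μ) (hγ : γ ∈ Set.Ioo (0 : ℝ) 1)
    (v : ℝ → ℝ)
    (hdiff : ∀ t ∈ Set.Ico (0 : ℝ) T, DifferentiableWithinAt ℝ v (Set.Ico 0 T) t)
    (hpos : ∀ t ∈ Set.Ico (0 : ℝ) T, 0 < v t)
    (hineq : ∀ t ∈ Set.Ico (0 : ℝ) T,
      derivWithin v (Set.Ico 0 T) t ≤ -μ * v t ^ γ) :
    T ≤ v 0 ^ (1 - γ) / (μ * (1 - γ)) := by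
  obtain ⟨hγ0, hγ1⟩ := hγ
  have h1γ : (0:ℝ) < 1 - γ := by linarith
  set c : ℝ := μ * (1 - γ) with hc
  have hcpos : 0 < c := mul_pos hμ h1γ
  set D := Set.Ico (0:ℝ) T with hD
  set g : ℝ → ℝ := fun t => v t ^ (1 - γ) + c * t with hg
  -- g has nonpositive derivative on interior D = Ioo 0 T
  have hintD : interior D = Set.Ioo 0 T := interior_Ico
  have hgderiv : ∀ t ∈ D, HasDerivWithinAt g
      (derivWithin v D t * (1 - γ) * v t ^ (1 - γ - 1) + c) D t := by
    intro t ht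
    have hv := (hdiff t ht).hasDerivWithinAt
    have h1 := hv.rpow_const (p := 1 - γ) (Or.inl (hpos t ht).ne')
    have h2 := h1.add ((hasDerivWithinAt_id t D).const_mul c)
    simp only [mul_one] at h2
    exact h2
  have hanti : AntitoneOn g D := by
    apply antitoneOn_of_deriv_nonpos (convex_Ico 0 T)
    · intro t ht
      exact (hgderiv t ht).continuousWithinAt
    · intro t ht
      rw [hintD] at ht
      have hmem : t ∈ D := Set.Ioo_subset_Ico_self ht
      have hnhds : D ∈ nhds t := by
        rw [hD]
        exact Filter.mem_of_superset (Ioo_mem_nhds ht.1 ht.2) Set.Ioo_subset_Ico_self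
      exact ((hgderiv t hmem).hasDerivAt hnhds).differentiableAt.differentiableWithinAt
    · intro t ht
      rw [hintD] at ht
      have hmem : t ∈ D := Set.Ioo_subset_Ico_self ht
      have hnhds : D ∈ nhds t := by
        rw [hD]
        exact Filter.mem_of_superset (Ioo_mem_nhds ht.1 ht.2) Set.Ioo_subset_Ico_self
      rw [((hgderiv t hmem).hasDerivAt hnhds).deriv]
      have hvpos := hpos t hmem
      have hkey : derivWithin v D t * (1 - γ) * v t ^ (1 - γ - 1) ≤ -c := by
        have hpow : (0:ℝ) < v t ^ (1 - γ - 1) := Real.rpow_pos_of_pos hvpos _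
        have h2 : derivWithin v D t * (1 - γ) * v t ^ (1 - γ - 1)
            ≤ (-μ * v t ^ γ) * (1 - γ) * v t ^ (1 - γ - 1) := by
          exact mul_le_mul_of_nonneg_right
            (mul_le_mul_of_nonneg_right (hineq t hmem) h1γ.le) hpow.le
        calc derivWithin v D t * (1 - γ) * v t ^ (1 - γ - 1)
            ≤ (-μ * v t ^ γ) * (1 - γ) * v t ^ (1 - γ - 1) := h2
          _ = -c := by
              have : v t ^ γ * v t ^ (1 - γ - 1) = v t ^ (γ + (1 - γ - 1)) :=
                (Real.rpow_add hvpos _ _).symm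
              rw [hc]
              rw [show (-μ * v t ^ γ) * (1 - γ) * v t ^ (1 - γ - 1)
                  = -(μ * (1 - γ)) * (v t ^ γ * v t ^ (1 - γ - 1)) by ring, this]
              norm_num
      linarith
  -- g s ≤ g 0 for s ∈ D, and v s ^ (1-γ) > 0, so c * s < g 0 = v 0 ^ (1-γ)
  have hbound : ∀ s ∈ D, s < v 0 ^ (1 - γ) / c := by
    intro s hs
    have h0 : (0:ℝ) ∈ D := ⟨le_refl 0, hT⟩
    have := hanti h0 hs hs.1
    have hvs : 0 < v s ^ (1 - γ) := Real.rpow_pos_of_pos (hpos s hs) _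
    have : c * s < v 0 ^ (1 - γ) := by simp [hg] at this; nlinarith
    exact (lt_div_iff₀' hcpos).mpr this
  by_contra h
  push_neg at h
  set s := (v 0 ^ (1 - γ) / c + T) / 2 with hs
  have hq : 0 < v 0 ^ (1 - γ) / c :=
    div_pos (Real.rpow_pos_of_pos (hpos 0 ⟨le_refl 0, hT⟩) _) hcpos
  have hsD : s ∈ D := ⟨by positivity, by rw [hs]; linarith⟩
  have := hbound s hsD
  rw [hs] at this
  linarith
end

section
/- Let f : ℝⁿ → ℝⁿ, let q ∈ ℕⁿ with q_i ≥ 1 for all i, let λ ∈ ℕⁿ, let μ > 0, let p be a natural number, let Ω ⊆ ℝⁿ, let V be a real polynomial in n variables, and let g₁, …, g_m be real polynomials with g_i(x) ≥ 0 for all x ∈ Ω and all i. Define f̃_i(z) := (1/q_i)·f_i(z)·|z_i|^{1/q_i − 1}. Suppose there exist polynomials t₁, …, t_m, each a sum of squares of polynomials, and polynomials h₁, …, h_N such that for all x ∈ ℝⁿ with x_i ≠ 0 for every i, −∇V(x)ᵀ f̃(sign(x)·|x|^q)·∏_{i=1}^n |x_i|^{λ_i} − μ·‖x‖^p·∏_{i=1}^n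 |x_i|^{λ_i} − Σ_{j=1}^m t_j(x)·g_j(x) = Σ_{l=1}^N h_l(x)². Then ∇V(x)ᵀ f̃(sign(x)·|x|^q) ≤ −μ·‖x‖^p for every x ∈ Ω with x_i ≠ 0 for all i. -/
/-- A real polynomial in `n` variables is a sum of squares if it can be written as a
finite sum of squares of polynomials. -/
def IsSumOfSquares' {n : ℕ} (s : MvPolynomial (Fin n) ℝ) : Prop :=
  ∃ (N : ℕ) (h : Fin N → MvPolynomial (Fin n) ℝ), s = ∑ l, (h l) ^ 2

/-- the SoS certificate (8) of the paper implies the gradient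
inequality on `Ω` away from the coordinate hyperplanes. Here `‖x‖` is the Euclidean
norm `√(Σ xᵢ²)`, the gradient of the polynomial `V` is given by its partial derivatives,
and `f̃ᵢ(z) = (1/qᵢ)·fᵢ(z)·|zᵢ|^{1/qᵢ − 1}`. -/
theorem stmt_13 {n m N : ℕ}
    (f : (Fin n → ℝ) → (Fin n → ℝ))
    (q lam : Fin n → ℕ) (hq : ∀ i, 1 ≤ q i)
    (μ : ℝ) (hμ : 0 < μ) (p : ℕ)
    (Ω : Set (Fin n → ℝ))
    (V : MvPolynomial (Fin n) ℝ)
    (g : Fin m → MvPolynomial (Fin n) ℝ)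
    (hg : ∀ x ∈ Ω, ∀ j, 0 ≤ MvPolynomial.eval x (g j))
    (ftil : (Fin n → ℝ) → (Fin n → ℝ))
    (hftil : ∀ z i, ftil z i = (1 / (q i : ℝ)) * f z i * |z i| ^ (1 / (q i : ℝ) - 1))
    (t : Fin m → MvPolynomial (Fin n) ℝ) (ht : ∀ j, IsSumOfSquares' (t j))
    (h : Fin N → MvPolynomial (Fin n) ℝ)
    (hcert : ∀ x : Fin n → ℝ, (∀ i, x i ≠ 0) →
      -(∑ i, MvPolynomial.eval x (MvPolynomial.pderiv i V) *
            ftil (fun i => Real.sign (x i) * |x i| ^ (q i : ℝ)) i) * (∏ i, |x i| ^ lam i)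
        - μ * Real.sqrt (∑ i, x i ^ 2) ^ p * (∏ i, |x i| ^ lam i)
        - ∑ j, MvPolynomial.eval x (t j) * MvPolynomial.eval x (g j)
      = ∑ l, MvPolynomial.eval x (h l) ^ 2) :
    ∀ x ∈ Ω, (∀ i, x i ≠ 0) →
      (∑ i, MvPolynomial.eval x (MvPolynomial.pderiv i V) *
          ftil (fun i => Real.sign (x i) * |x i| ^ (q i : ℝ)) i)
        ≤ -μ * Real.sqrt (∑ i, x i ^ 2) ^ p := by
  intro x hx hx0
  have hP : 0 < ∏ i, |x i| ^ lam i := by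
    apply Finset.prod_pos
    intro i _
    exact pow_pos (abs_pos.mpr (hx0 i)) _
  have ht0 : ∀ j, 0 ≤ MvPolynomial.eval x (t j) := by
    intro j
    obtain ⟨M, hh, hrep⟩ := ht j
    rw [hrep]
    simp only [map_sum, map_pow]
    exact Finset.sum_nonneg fun l _ => sq_nonneg _
  have hsum : 0 ≤ ∑ j, MvPolynomial.eval x (t j) * MvPolynomial.eval x (g j) :=
    Finset.sum_nonneg fun j _ => mul_nonneg (ht0 j) (hg x hx j)
  have hsq : 0 ≤ ∑ l, MvPolynomial.eval x (h l) ^ 2 :=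
    Finset.sum_nonneg fun l _ => sq_nonneg _
  have hc := hcert x hx0
  set A := ∑ i, MvPolynomial.eval x (MvPolynomial.pderiv i V) *
      ftil (fun i => Real.sign (x i) * |x i| ^ (q i : ℝ)) i with hA
  have key : 0 ≤ (-A - μ * Real.sqrt (∑ i, x i ^ 2) ^ p) * (∏ i, |x i| ^ lam i) := by
    nlinarith [hc, hsum, hsq]
  nlinarith [mul_nonneg key (le_of_lt hP), hP]
end

section
/- Define f : ℝ → ℝ by f(z) := −sign(z)·|z|^{2/3}. Then for every T > 0 and every continuously differentiable curve x : [0, T) → ℝ satisfying x′(t) = f(x(t)) and x(t) ≠ 0 for all t ∈ [0, T), it holds that T ≤ 3.62·|x(0)|^{1/3}. -/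
/-- settling-time bound for Example 1 of the paper: any C¹ solution of
`x' = −sign(x)·|x|^{2/3}` that stays away from the origin on `[0, T)` satisfies
`T ≤ 3.62·|x(0)|^{1/3}`. -/
theorem stmt_17 :
    let f : ℝ → ℝ := fun z => -(Real.sign z * |z| ^ ((2 : ℝ) / 3))
    ∀ (T : ℝ), 0 < T →
      ∀ x : ℝ → ℝ,
        ContDiffOn ℝ 1 x (Set.Ico 0 T) →
        (∀ t ∈ Set.Ico (0 : ℝ) T, HasDerivWithinAt x (f (x t)) (Set.Ico 0 T) t) →
        (∀ t ∈ Set.Ico (0 : ℝ) T, x t ≠ 0) →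
        T ≤ 3.62 * |x 0| ^ ((1 : ℝ) / 3) := by
  intro f T hT x hC hderiv hne
  set s := Set.Ico (0:ℝ) T with hs
  have h0s : (0:ℝ) ∈ s := ⟨le_refl _, hT⟩
  have hconv : Convex ℝ s := convex_Ico 0 T
  have hcont : ContinuousOn x s := hC.continuousOn
  -- sign constancy
  have hsign : (∀ t ∈ s, 0 < x t) ∨ (∀ t ∈ s, x t < 0) := by
    rcases lt_or_gt_of_ne (hne 0 h0s) with h0 | h0
    · right; intro t ht
      by_contra h
      push_neg at h
      have hsub : Set.Icc (0:ℝ) t ⊆ s := fun u hu => ⟨hu.1, lt_of_le_of_lt hu.2 ht.2⟩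
      have hmem : (0:ℝ) ∈ Set.Icc (x 0) (x t) := ⟨h0.le, h⟩
      obtain ⟨u, hu, hxu⟩ := intermediate_value_Icc ht.1 (hcont.mono hsub) hmem
      exact hne u (hsub hu) hxu
    · left; intro t ht
      by_contra h
      push_neg at h
      have hsub : Set.Icc (0:ℝ) t ⊆ s := fun u hu => ⟨hu.1, lt_of_le_of_lt hu.2 ht.2⟩
      have hmem : (0:ℝ) ∈ Set.Icc (x t) (x 0) := ⟨h, h0.le⟩
      obtain ⟨u, hu, hxu⟩ := intermediate_value_Icc' ht.1 (hcont.mono hsub) hmem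
      exact hne u (hsub hu) hxu
  set g : ℝ → ℝ := fun t => |x t| ^ ((1:ℝ)/3) with hg
  have hgderiv : ∀ t ∈ s, HasDerivWithinAt g (-(1/3)) s t := by
    rcases hsign with hpos | hneg
    · intro t ht
      have ha : 0 < x t := hpos t ht
      have h1 : HasDerivWithinAt (fun u => x u ^ ((1:ℝ)/3))
          (f (x t) * ((1:ℝ)/3) * x t ^ ((1:ℝ)/3 - 1)) s t :=
        (hderiv t ht).rpow_const (Or.inl ha.ne')
      have h2 : HasDerivWithinAt g
          (f (x t) * ((1:ℝ)/3) * x t ^ ((1:ℝ)/3 - 1)) s t := by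
        refine h1.congr (fun u hu => ?_) ?_
        · simp [hg, abs_of_pos (hpos u hu)]
        · simp [hg, abs_of_pos ha]
      have heq : f (x t) * ((1:ℝ)/3) * x t ^ ((1:ℝ)/3 - 1) = -(1/3) := by
        have hf : f (x t) = -(x t ^ ((2:ℝ)/3)) := by
          simp [f, Real.sign_of_pos ha, abs_of_pos ha]
        rw [hf]
        have : x t ^ ((2:ℝ)/3) * x t ^ ((1:ℝ)/3 - 1) = 1 := by
          rw [← Real.rpow_add ha]
          norm_num
        calc -(x t ^ ((2:ℝ)/3)) * ((1:ℝ)/3) * x t ^ ((1:ℝ)/3 - 1)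
            = -(((1:ℝ)/3) * (x t ^ ((2:ℝ)/3) * x t ^ ((1:ℝ)/3 - 1))) := by ring
          _ = -(1/3) := by rw [this]; ring
      rwa [heq] at h2
    · intro t ht
      have ha : x t < 0 := hneg t ht
      have ha' : 0 < -x t := by linarith
      have h1 : HasDerivWithinAt (fun u => (-x u) ^ ((1:ℝ)/3))
          (-f (x t) * ((1:ℝ)/3) * (-x t) ^ ((1:ℝ)/3 - 1)) s t :=
        ((hderiv t ht).neg).rpow_const (Or.inl ha'.ne')
      have h2 : HasDerivWithinAt g
          (-f (x t) * ((1:ℝ)/3) * (-x t) ^ ((1:ℝ)/3 - 1)) s t := by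
        refine h1.congr (fun u hu => ?_) ?_
        · simp [hg, abs_of_neg (hneg u hu)]
        · simp [hg, abs_of_neg ha]
      have heq : -f (x t) * ((1:ℝ)/3) * (-x t) ^ ((1:ℝ)/3 - 1) = -(1/3) := by
        have hf : -f (x t) = -((-x t) ^ ((2:ℝ)/3)) := by
          simp [f, Real.sign_of_neg ha, abs_of_neg ha]
        rw [hf]
        have : (-x t) ^ ((2:ℝ)/3) * (-x t) ^ ((1:ℝ)/3 - 1) = 1 := by
          rw [← Real.rpow_add ha']
          norm_num
        calc -((-x t) ^ ((2:ℝ)/3)) * ((1:ℝ)/3) * (-x t) ^ ((1:ℝ)/3 - 1)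
            = -(((1:ℝ)/3) * ((-x t) ^ ((2:ℝ)/3) * (-x t) ^ ((1:ℝ)/3 - 1))) := by ring
          _ = -(1/3) := by rw [this]; ring
      rwa [heq] at h2
  -- F t = g t + t/3 has zero derivative, hence constant
  have hF : ∀ t ∈ s, HasDerivWithinAt (fun u => g u + u * (1/3)) 0 s t := by
    intro t ht
    have := (hgderiv t ht).add ((hasDerivWithinAt_id t s).mul_const (1/3))
    rw [show (-(1/3:ℝ)) + 1 * (1/3) = 0 by norm_num] at this
    exact this
  have hkey : ∀ t ∈ s, g t = g 0 - t / 3 := by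
    intro t ht
    have hb := hconv.norm_image_sub_le_of_norm_hasDerivWithin_le (C := 0) hF
      (fun u _ => by simp) h0s ht
    have : |(g t + t * (1/3)) - (g 0 + 0 * (1/3))| ≤ 0 := by simpa using hb
    have h0 : (g t + t * (1/3)) - (g 0 + 0 * (1/3)) = 0 := by
      have := abs_nonneg ((g t + t * (1/3)) - (g 0 + 0 * (1/3)))
      have habs := le_antisymm ‹|(g t + t * (1/3)) - (g 0 + 0 * (1/3))| ≤ 0› this
      exact abs_eq_zero.mp habs
    linarith
  have hgpos : ∀ t ∈ s, 0 < g t := by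
    intro t ht
    exact Real.rpow_pos_of_pos (abs_pos.mpr (hne t ht)) _
  have hg0 : 0 < g 0 := hgpos 0 h0s
  have hT3 : T ≤ 3 * g 0 := by
    by_contra h
    push_neg at h
    have hts : (3 * g 0) ∈ s := ⟨by positivity, h⟩
    have := hgpos _ hts
    rw [hkey _ hts] at this
    linarith
  have : (3.62 : ℝ) * g 0 ≥ 3 * g 0 := by nlinarith
  calc T ≤ 3 * g 0 := hT3
    _ ≤ 3.62 * g 0 := this
    _ = 3.62 * |x 0| ^ ((1:ℝ)/3) := rfl
end
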